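/- The inequality 1 > (1−q)·x/(sin x) + q·x/(tan x) holds for all x in (0, π/2) if and only if q ≥ 1 − 2/π. -/

import Mathlib

open Real Set Filter Topology

noncomputable def Hf (x : ℝ) : ℝ := π * Real.sin x - 2*x - (π-2)*(x*Real.cos x)
noncomputable def Hf1 (x : ℝ) : ℝ := 2*Real.cos x - 2 + (π-2)*(x*Real.sin x)
noncomputable def Hf2 (x : ℝ) : ℝ := (π-4)*Real.sin x + (π-2)*(x*Real.cos x)
noncomputable def Hf3 (x : ℝ) : ℝ := (2*π-6)*Real.cos x - (π-2)*(x*Real.sin x)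
noncomputable def Hf4 (x : ℝ) : ℝ := (8-3*π)*Real.sin x - (π-2)*(x*Real.cos x)

lemma hasDerivAt_Hf (x : ℝ) : HasDerivAt Hf (Hf1 x) x := by
  unfold Hf Hf1
  have h : HasDerivAt (fun x => π * Real.sin x - 2*x - (π-2)*(x*Real.cos x))
      (π * Real.cos x - 2*1 - (π-2)*(1*Real.cos x + x*(-Real.sin x))) x :=
    (((Real.hasDerivAt_sin x).const_mul π).sub ((hasDerivAt_id' x).const_mul 2)).sub
      (((hasDerivAt_id' x).mul (Real.hasDerivAt_cos x)).const_mul (π-2))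
  convert h using 1
  ring

lemma hasDerivAt_Hf1 (x : ℝ) : HasDerivAt Hf1 (Hf2 x) x := by
  unfold Hf1 Hf2
  have h : HasDerivAt (fun x => 2*Real.cos x - 2 + (π-2)*(x*Real.sin x))
      (2*(-Real.sin x) - 0 + (π-2)*(1*Real.sin x + x*Real.cos x)) x :=
    (((Real.hasDerivAt_cos x).const_mul 2).sub (hasDerivAt_const x 2)).add
      (((hasDerivAt_id' x).mul (Real.hasDerivAt_sin x)).const_mul (π-2))
  convert h using 1
  ring

lemma hasDerivAt_Hf2 (x : ℝ) : HasDerivAt Hf2 (Hf3 x) x := by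
  unfold Hf2 Hf3
  have h : HasDerivAt (fun x => (π-4)*Real.sin x + (π-2)*(x*Real.cos x))
      ((π-4)*Real.cos x + (π-2)*(1*Real.cos x + x*(-Real.sin x))) x :=
    ((Real.hasDerivAt_sin x).const_mul (π-4)).add
      (((hasDerivAt_id' x).mul (Real.hasDerivAt_cos x)).const_mul (π-2))
  convert h using 1
  ring

lemma hasDerivAt_Hf3 (x : ℝ) : HasDerivAt Hf3 (Hf4 x) x := by
  unfold Hf3 Hf4
  have h : HasDerivAt (fun x => (2*π-6)*Real.cos x - (π-2)*(x*Real.sin x))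
      ((2*π-6)*(-Real.sin x) - (π-2)*(1*Real.sin x + x*Real.cos x)) x :=
    ((Real.hasDerivAt_cos x).const_mul (2*π-6)).sub
      (((hasDerivAt_id' x).mul (Real.hasDerivAt_sin x)).const_mul (π-2))
  convert h using 1
  ring

lemma mono_of_deriv_pos' {f f' : ℝ → ℝ} {a b : ℝ}
    (hd : ∀ x, HasDerivAt f (f' x) x)
    (hpos : ∀ x ∈ Ioo a b, 0 < f' x) : StrictMonoOn f (Icc a b) := by
  apply strictMonoOn_of_deriv_pos (convex_Icc a b)
    (fun x _ => (hd x).continuousAt.continuousWithinAt)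
  intro x hx
  rw [interior_Icc] at hx
  rw [(hd x).deriv]
  exact hpos x hx

lemma anti_of_deriv_neg' {f f' : ℝ → ℝ} {a b : ℝ}
    (hd : ∀ x, HasDerivAt f (f' x) x)
    (hneg : ∀ x ∈ Ioo a b, f' x < 0) : StrictAntiOn f (Icc a b) := by
  apply strictAntiOn_of_deriv_neg (convex_Icc a b)
    (fun x _ => (hd x).continuousAt.continuousWithinAt)
  intro x hx
  rw [interior_Icc] at hx
  rw [(hd x).deriv]
  exact hneg x hx

lemma crossing {f : ℝ → ℝ} {a b : ℝ} (hab : a < b)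
    (hcont : ContinuousOn f (Icc a b))
    (hanti : StrictAntiOn f (Icc a b)) (hfa : 0 < f a) (hfb : f b < 0) :
    ∃ c ∈ Ioo a b, (∀ x ∈ Ioo a c, 0 < f x) ∧ (∀ x ∈ Ioo c b, f x < 0) := by
  have h0 : (0:ℝ) ∈ Ioo (f b) (f a) := ⟨hfb, hfa⟩
  obtain ⟨c, hc, hfc⟩ := intermediate_value_Ioo' hab.le hcont h0
  refine ⟨c, hc, fun x hx => ?_, fun x hx => ?_⟩
  · have := hanti ⟨hx.1.le, (hx.2.trans hc.2).le⟩ ⟨hc.1.le, hc.2.le⟩ hx.2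
    rw [hfc] at this; exact this
  · have := hanti ⟨hc.1.le, hc.2.le⟩ ⟨(hc.1.trans hx.1).le, hx.2.le⟩ hx.1
    rw [hfc] at this; exact this

lemma step {f f' : ℝ → ℝ} {a b c : ℝ} (hac : a < c) (hcb : c < b)
    (hd : ∀ x, HasDerivAt f (f' x) x)
    (hpos : ∀ x ∈ Ioo a c, 0 < f' x) (hneg : ∀ x ∈ Ioo c b, f' x < 0)
    (hfa : f a = 0) (hfb : f b < 0) :
    ∃ c' ∈ Ioo a b, (∀ x ∈ Ioo a c', 0 < f x) ∧ (∀ x ∈ Ioo c' b, f x < 0) := by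
  have hmono : StrictMonoOn f (Icc a c) := mono_of_deriv_pos' hd hpos
  have hanti : StrictAntiOn f (Icc c b) := anti_of_deriv_neg' hd hneg
  have hfc : 0 < f c := by
    have := hmono (left_mem_Icc.2 hac.le) (right_mem_Icc.2 hac.le) hac
    linarith [hfa ▸ this]
  obtain ⟨c', hc', hp, hn⟩ := crossing hcb
    (fun x _ => (hd x).continuousAt.continuousWithinAt) hanti hfc hfb
  refine ⟨c', ⟨hac.trans hc'.1, hc'.2⟩, fun x hx => ?_, fun x hx => hn x hx⟩
  rcases le_or_gt x c with h | h
  · have := hmono (left_mem_Icc.2 hac.le) ⟨hx.1.le, h⟩ hx.1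
    linarith
  · exact hp x ⟨h, hx.2⟩

lemma final {f f' : ℝ → ℝ} {a b c : ℝ} (hac : a < c) (hcb : c < b)
    (hd : ∀ x, HasDerivAt f (f' x) x)
    (hpos : ∀ x ∈ Ioo a c, 0 < f' x) (hneg : ∀ x ∈ Ioo c b, f' x < 0)
    (hfa : f a = 0) (hfb : f b = 0) :
    ∀ x ∈ Ioo a b, 0 < f x := by
  have hmono : StrictMonoOn f (Icc a c) := mono_of_deriv_pos' hd hpos
  have hanti : StrictAntiOn f (Icc c b) := anti_of_deriv_neg' hd hneg
  intro x hx
  rcases le_or_gt x c with h | h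
  · have := hmono (left_mem_Icc.2 hac.le) ⟨hx.1.le, h⟩ hx.1
    linarith
  · have := hanti ⟨h.le, hx.2.le⟩ (right_mem_Icc.2 hcb.le) hx.2
    linarith

lemma Hf_pos : ∀ x ∈ Ioo 0 (π/2), 0 < Hf x := by
  have hπ3 := Real.pi_gt_three
  have hπ15 := Real.pi_lt_d2
  have hπ := Real.pi_pos
  have hH3anti : StrictAntiOn Hf3 (Icc 0 (π/2)) := by
    apply anti_of_deriv_neg' hasDerivAt_Hf3
    intro x hx
    have hs : 0 < Real.sin x := Real.sin_pos_of_pos_of_lt_pi hx.1 (by linarith [hx.2])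
    have hc : 0 < Real.cos x := Real.cos_pos_of_mem_Ioo ⟨by linarith [hx.1], hx.2⟩
    unfold Hf4
    nlinarith [mul_pos hx.1 hc]
  have hH3a : 0 < Hf3 0 := by
    simp [Hf3]
    linarith
  have hH3b : Hf3 (π/2) < 0 := by
    simp [Hf3]
    nlinarith [mul_pos hπ hπ]
  obtain ⟨c3, hc3, hp3, hn3⟩ := crossing Real.pi_div_two_pos
    (fun x _ => (hasDerivAt_Hf3 x).continuousAt.continuousWithinAt) hH3anti hH3a hH3b
  have hH2a : Hf2 0 = 0 := by simp [Hf2]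
  have hH2b : Hf2 (π/2) < 0 := by
    simp [Hf2]
    linarith
  obtain ⟨c2, hc2, hp2, hn2⟩ := step hc3.1 hc3.2 hasDerivAt_Hf2 hp3 hn3 hH2a hH2b
  have hH1a : Hf1 0 = 0 := by simp [Hf1]
  have hH1b : Hf1 (π/2) < 0 := by
    simp [Hf1]
    nlinarith
  obtain ⟨c1, hc1, hp1, hn1⟩ := step hc2.1 hc2.2 hasDerivAt_Hf1 hp2 hn2 hH1a hH1b
  have hHa : Hf 0 = 0 := by simp [Hf]
  have hHb : Hf (π/2) = 0 := by
    simp [Hf]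
    ring
  exact final hc1.1 hc1.2 hasDerivAt_Hf hp1 hn1 hHa hHb

lemma equiv_ineq (q x : ℝ) (hx0 : 0 < x) (hx : x < π/2) :
    ((1 - q) * x / Real.sin x + q * x / Real.tan x < 1) ↔
    (1-q)*x + q*(x*Real.cos x) < Real.sin x := by
  have hπ := Real.pi_pos
  have hs : 0 < Real.sin x := Real.sin_pos_of_pos_of_lt_pi hx0 (by linarith)
  have hc : 0 < Real.cos x := Real.cos_pos_of_mem_Ioo ⟨by linarith, hx⟩
  have h1 : (1 - q) * x / Real.sin x + q * x / Real.tan x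
      = ((1-q)*x + q*(x*Real.cos x)) / Real.sin x := by
    rw [Real.tan_eq_sin_div_cos]
    field_simp
  rw [h1, div_lt_one hs]

theorem huygens_type_q_circular_reciprocal (q : ℝ) :
    (∀ x : ℝ, 0 < x → x < π / 2 →
      1 > (1 - q) * x / Real.sin x + q * x / Real.tan x) ↔ q ≥ 1 - 2 / π := by
  have hπ := Real.pi_pos
  constructor
  · intro h
    by_contra hq
    push_neg at hq
    set F : ℝ → ℝ := fun x => Real.sin x - ((1-q)*x + q*(x*Real.cos x)) with hF
    have hFc : ContinuousAt F (π/2) := by fun_prop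
    have hFv : F (π/2) < 0 := by
      simp only [hF, Real.sin_pi_div_two, Real.cos_pi_div_two, mul_zero]
      have h2 : 2/π < 1 - q := by linarith
      have h3 : 2 < (1-q)*π := (div_lt_iff₀ hπ).mp h2
      nlinarith
    have ht : Tendsto F (𝓝[<] (π/2)) (𝓝 (F (π/2))) :=
      hFc.tendsto.mono_left nhdsWithin_le_nhds
    have h1 : ∀ᶠ x in 𝓝[<] (π/2), F x < 0 := ht (Iio_mem_nhds hFv)
    have h2 : ∀ᶠ x in 𝓝[<] (π/2), x ∈ Ioo 0 (π/2) :=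
      Ioo_mem_nhdsLT_of_mem ⟨Real.pi_div_two_pos, le_refl _⟩
    obtain ⟨x, hx1, hx2⟩ := (h1.and h2).exists
    have hlt := (equiv_ineq q x hx2.1 hx2.2).mp (h x hx2.1 hx2.2)
    simp only [hF] at hx1
    linarith
  · intro hq x hx0 hx2
    rw [gt_iff_lt, equiv_ineq q x hx0 hx2]
    have hH := Hf_pos x ⟨hx0, hx2⟩
    have hcos : Real.cos x ≤ 1 := Real.cos_le_one x
    have hq' : π - 2 ≤ π * q := by
      have h1 := mul_le_mul_of_nonneg_left hq hπ.le
      have h2 : π * (1 - 2/π) = π - 2 := by field_simp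
      linarith
    unfold Hf at hH
    nlinarith [mul_nonneg (mul_nonneg hx0.le (sub_nonneg.2 hcos)) (sub_nonneg.2 hq')]
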